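/- Let (X,T,μ) be a system with exponential decay of correlations for α-Hölder continuous functions, with constants C, τ > 0. Then there is a constant C₂ > 0, depending only on C and τ, with the following property: for every m ≥ 3, every γ > 1, every ρ ∈ (0,1], and every α-Hölder continuous function f : X → [0,1] with α-Hölder norm ‖f‖ ≤ 2ρ^{−α}, the sum Z(x) = Σ_{k=0}^{m−1} f(T^k x) satisfies ∫ Z² dμ − (∫ Z dμ)² ≤ C₂ m ( μ(f) + ρ^{−2α} e^{−τ(log m)^γ} + (log m)^γ μ(f) ), where μ(f) = ∫ f dμ. -/

import Mathlib

open MeasureTheory Filter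

/-- The `α`-Hölder norm: `sup|f| + inf{K ≥ 0 : |f(x) - f(y)| ≤ K d(x,y)^α}`. -/
noncomputable def holderNorm {X : Type*} [MetricSpace X] (α : ℝ) (f : X → ℝ) : ℝ :=
  (⨆ x, |f x|) + sInf {K : ℝ | 0 ≤ K ∧ ∀ x y, |f x - f y| ≤ K * dist x y ^ α}

lemma holderNorm_nonneg {X : Type*} [MetricSpace X] (α : ℝ) (f : X → ℝ) :
    0 ≤ holderNorm α f := by
  unfold holderNorm
  refine add_nonneg (Real.iSup_nonneg fun x => abs_nonneg _) (Real.sInf_nonneg fun K hK => hK.1)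

/-- Bound for a double sum of a nonnegative function of the distance of indices. -/
lemma double_sum_dist_le (b : ℕ → ℝ) (hb : ∀ n, 0 ≤ b n) (m : ℕ) :
    ∑ j ∈ Finset.range m, ∑ k ∈ Finset.range m, b (Nat.dist j k) ≤
      2 * m * ∑ n ∈ Finset.range m, b n := by
  have key : ∀ j ∈ Finset.range m, ∑ k ∈ Finset.range m, b (Nat.dist j k) ≤
      2 * ∑ n ∈ Finset.range m, b n := by
    intro j hj
    rw [Finset.mem_range] at hj
    have hsplit : ∑ k ∈ Finset.range m, b (Nat.dist j k) =
        (∑ k ∈ Finset.range (j + 1), b (Nat.dist j k)) +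
          ∑ k ∈ Finset.Ico (j + 1) m, b (Nat.dist j k) := by
      rw [Finset.range_eq_Ico, ← Finset.sum_Ico_consecutive _ (Nat.zero_le (j + 1)) hj,
        Finset.range_eq_Ico]
    have h1 : ∑ k ∈ Finset.range (j + 1), b (Nat.dist j k) ≤ ∑ n ∈ Finset.range m, b n := by
      have e1 : ∑ k ∈ Finset.range (j + 1), b (Nat.dist j k) =
          ∑ k ∈ Finset.range (j + 1), b k := by
        rw [← Finset.sum_range_reflect (fun k => b (Nat.dist j k)) (j + 1)]
        refine Finset.sum_congr rfl fun i hi => ?_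
        rw [Finset.mem_range] at hi
        have hij : i ≤ j := Nat.lt_succ_iff.mp hi
        have : Nat.dist j (j + 1 - 1 - i) = i := by
          simp only [Nat.add_sub_cancel]
          rw [Nat.dist_eq_sub_of_le_right (Nat.sub_le j i), Nat.sub_sub_self hij]
        rw [this]
      rw [e1]
      exact Finset.sum_le_sum_of_subset_of_nonneg
        (Finset.range_subset_range.2 hj) (fun i _ _ => hb i)
    have h2 : ∑ k ∈ Finset.Ico (j + 1) m, b (Nat.dist j k) ≤ ∑ n ∈ Finset.range m, b n := by
      have e2 : ∑ k ∈ Finset.Ico (j + 1) m, b (Nat.dist j k) =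
          ∑ n ∈ Finset.Ico 1 (m - j), b n := by
        rw [Finset.sum_Ico_eq_sum_range, Finset.sum_Ico_eq_sum_range]
        have hmj : m - (j + 1) = m - j - 1 := by omega
        rw [hmj]
        refine Finset.sum_congr rfl fun i _ => ?_
        congr 1
        rw [Nat.dist_eq_sub_of_le (by omega : j ≤ j + 1 + i)]
        omega
      rw [e2]
      refine Finset.sum_le_sum_of_subset_of_nonneg ?_ (fun i _ _ => hb i)
      intro n hn
      rw [Finset.mem_Ico] at hn
      rw [Finset.mem_range]
      omega
    calc ∑ k ∈ Finset.range m, b (Nat.dist j k)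
        = _ + _ := hsplit
      _ ≤ (∑ n ∈ Finset.range m, b n) + ∑ n ∈ Finset.range m, b n := add_le_add h1 h2
      _ = 2 * ∑ n ∈ Finset.range m, b n := (two_mul _).symm
  calc ∑ j ∈ Finset.range m, ∑ k ∈ Finset.range m, b (Nat.dist j k)
      ≤ ∑ _j ∈ Finset.range m, 2 * ∑ n ∈ Finset.range m, b n := Finset.sum_le_sum key
    _ = m * (2 * ∑ n ∈ Finset.range m, b n) := by
        rw [Finset.sum_const, Finset.card_range, nsmul_eq_mul]
    _ = 2 * m * ∑ n ∈ Finset.range m, b n := by ring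

set_option maxHeartbeats 1000000 in
/-- The variance estimate for Birkhoff-type sums of Hölder functions: there is `C₂ > 0`
(depending only on `C` and `τ`) such that for every `m ≥ 3`, `γ > 1`, `ρ ∈ (0,1]` and
every `α`-Hölder `f : X → [0,1]` with `‖f‖_α ≤ 2ρ^{-α}`, the sum `Z = ∑_{k<m} f ∘ T^k`
satisfies `∫ Z² - (∫ Z)² ≤ C₂ m (μ(f) + ρ^{-2α} e^{-τ (log m)^γ} + (log m)^γ μ(f))`. -/
theorem stmt10 {X : Type*} [MetricSpace X] [MeasurableSpace X] [BorelSpace X]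
    (μ : Measure X) [IsProbabilityMeasure μ] (T : X → X)
    (hT : MeasurePreserving T μ μ)
    (α : ℝ) (hα : α ∈ Set.Ioc (0 : ℝ) 1)
    (C τ : ℝ) (hC : 0 < C) (hτ : 0 < τ)
    (hdec : ∀ (n : ℕ) (f g : X → ℝ),
      (∃ M, ∀ x, |f x| ≤ M) → (∃ K ≥ 0, ∀ x y, |f x - f y| ≤ K * dist x y ^ α) →
      (∃ M, ∀ x, |g x| ≤ M) → (∃ K ≥ 0, ∀ x y, |g x - g y| ≤ K * dist x y ^ α) →
      |(∫ x, f (T^[n] x) * g x ∂μ) - (∫ x, f x ∂μ) * ∫ x, g x ∂μ| ≤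
        C * Real.exp (-τ * n) * holderNorm α f * holderNorm α g) :
    ∃ C₂ > 0, ∀ m : ℕ, 3 ≤ m → ∀ γ : ℝ, 1 < γ → ∀ ρ : ℝ, ρ ∈ Set.Ioc (0 : ℝ) 1 →
      ∀ f : X → ℝ, (∀ x, f x ∈ Set.Icc (0 : ℝ) 1) →
      (∃ K ≥ 0, ∀ x y, |f x - f y| ≤ K * dist x y ^ α) →
      holderNorm α f ≤ 2 * ρ ^ (-α) →
      ∫ x, (∑ k ∈ Finset.range m, f (T^[k] x)) ^ 2 ∂μ -
          (∫ x, ∑ k ∈ Finset.range m, f (T^[k] x) ∂μ) ^ 2 ≤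
        C₂ * m * ((∫ x, f x ∂μ) + ρ ^ (-(2 * α)) * Real.exp (-τ * Real.log m ^ γ) +
          Real.log m ^ γ * ∫ x, f x ∂μ) := by
  have hr0 : 0 < Real.exp (-τ) := Real.exp_pos _
  have hr1 : Real.exp (-τ) < 1 := Real.exp_lt_one_iff.2 (by linarith)
  have h1r : 0 < 1 - Real.exp (-τ) := by linarith
  refine ⟨4 + 8 * C / (1 - Real.exp (-τ)), by positivity, ?_⟩
  intro m hm γ hγ ρ hρ f hf hfH hfn
  set C₂ : ℝ := 4 + 8 * C / (1 - Real.exp (-τ)) with hC₂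
  set I : ℝ := ∫ x, f x ∂μ with hI
  set L : ℝ := Real.log m ^ γ with hL
  set ρ' : ℝ := ρ ^ (-(2 * α)) with hρ'
  set D : ℝ := 4 * C * ρ' with hD
  have hρpos : 0 < ρ := hρ.1
  have hρ'pos : 0 < ρ' := Real.rpow_pos_of_pos hρpos _
  clear_value C₂ I L ρ' D
  -- continuity, measurability, integrability
  have hcont : Continuous f := by
    obtain ⟨K, hK0, hK⟩ := hfH
    rw [continuous_iff_continuousAt]
    intro x
    rw [ContinuousAt, tendsto_iff_dist_tendsto_zero]
    have hd : Tendsto (fun y => dist y x) (nhds x) (nhds 0) :=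
      tendsto_iff_dist_tendsto_zero.1 tendsto_id
    have hpow : Tendsto (fun t : ℝ => K * t ^ α) (nhds 0) (nhds 0) := by
      have h1 : ContinuousAt (fun t : ℝ => t ^ α) 0 :=
        Real.continuousAt_rpow_const 0 α (Or.inr hα.1.le)
      have h2 := h1.tendsto
      rw [Real.zero_rpow (ne_of_gt hα.1)] at h2
      simpa using h2.const_mul K
    refine squeeze_zero (fun y => dist_nonneg) (fun y => ?_) (hpow.comp hd)
    rw [Real.dist_eq]
    exact hK y x
  have hfm : Measurable f := hcont.measurable
  have hTm : Measurable T := hT.measurable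
  have hFm : ∀ n : ℕ, Measurable fun x => f (T^[n] x) := fun n => hfm.comp (hTm.iterate n)
  have habs : ∀ y, |f y| ≤ 1 := fun y =>
    abs_le.2 ⟨by linarith [(hf y).1], (hf y).2⟩
  have hintF : ∀ n : ℕ, Integrable (fun x => f (T^[n] x)) μ := by
    intro n
    have := (integrable_const (1 : ℝ) (μ := μ)).bdd_mul
      (hFm n).aestronglyMeasurable (ae_of_all _ fun x => habs _)
    simpa using this
  have hintFF : ∀ j k : ℕ, Integrable (fun x => f (T^[j] x) * f (T^[k] x)) μ := by
    intro j k
    exact (hintF k).bdd_mul (hFm j).aestronglyMeasurable (ae_of_all _ fun x => habs _)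
  have hI0 : 0 ≤ I := by rw [hI]; exact integral_nonneg fun x => (hf x).1
  -- change of variables
  have hpush : ∀ (n : ℕ) (g : X → ℝ), AEStronglyMeasurable g μ →
      ∫ x, g (T^[n] x) ∂μ = ∫ x, g x ∂μ := by
    intro n g hg
    have h1 : Measure.map (T^[n]) μ = μ := (hT.iterate n).map_eq
    calc ∫ x, g (T^[n] x) ∂μ
        = ∫ y, g y ∂(Measure.map (T^[n]) μ) :=
          (integral_map (hTm.iterate n).aemeasurable (by rwa [h1])).symm
      _ = ∫ x, g x ∂μ := by rw [h1]
  have hFI : ∀ n : ℕ, ∫ x, f (T^[n] x) ∂μ = I := by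
    rw [hI]; exact fun n => hpush n f hfm.aestronglyMeasurable
  -- reduction of correlations to distance
  have hA : ∀ j k : ℕ, ∫ x, f (T^[j] x) * f (T^[k] x) ∂μ =
      ∫ x, f (T^[Nat.dist j k] x) * f x ∂μ := by
    have key : ∀ k j : ℕ, k ≤ j →
        ∫ x, f (T^[j] x) * f (T^[k] x) ∂μ = ∫ x, f (T^[j - k] x) * f x ∂μ := by
      intro k j hkj
      have e : (fun x => f (T^[j] x) * f (T^[k] x)) =
          fun x => (fun y => f (T^[j - k] y) * f y) (T^[k] x) := by
        funext x
        simp only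
        rw [← Function.iterate_add_apply, Nat.sub_add_cancel hkj]
      rw [e, hpush k (fun y => f (T^[j - k] y) * f y) ((hFm (j - k)).mul hfm).aestronglyMeasurable]
    intro j k
    rcases le_total k j with h | h
    · rw [key k j h, Nat.dist_eq_sub_of_le_right h]
    · have := key j k h
      rw [Nat.dist_eq_sub_of_le h, ← this]
      simp_rw [mul_comm]
  -- the covariance bounds
  have hBnd : 2 * ρ ^ (-α) * (2 * ρ ^ (-α)) = 4 * ρ' := by
    have : ρ ^ (-α) * ρ ^ (-α) = ρ' := by
      rw [hρ', ← Real.rpow_add hρpos]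
      congr 1
      ring
    calc 2 * ρ ^ (-α) * (2 * ρ ^ (-α)) = 4 * (ρ ^ (-α) * ρ ^ (-α)) := by ring
      _ = 4 * ρ' := by rw [this]
  have hnorm0 : 0 ≤ holderNorm α f := holderNorm_nonneg α f
  have hbd : ∃ M, ∀ x, |f x| ≤ M := ⟨1, fun x => habs x⟩
  have hcovD : ∀ n : ℕ, (∫ x, f (T^[n] x) * f x ∂μ) - I * I ≤ D * Real.exp (-τ * n) := by
    intro n
    have h := hdec n f f hbd hfH hbd hfH
    have hce : 0 ≤ C * Real.exp (-τ * n) := by positivity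
    have h2 : C * Real.exp (-τ * n) * holderNorm α f * holderNorm α f ≤
        C * Real.exp (-τ * n) * (2 * ρ ^ (-α)) * (2 * ρ ^ (-α)) := by
      have hB0 : 0 ≤ 2 * ρ ^ (-α) := le_trans hnorm0 hfn
      calc C * Real.exp (-τ * n) * holderNorm α f * holderNorm α f
          ≤ C * Real.exp (-τ * n) * (2 * ρ ^ (-α)) * holderNorm α f := by
            apply mul_le_mul_of_nonneg_right _ hnorm0
            exact mul_le_mul_of_nonneg_left hfn hce
        _ ≤ C * Real.exp (-τ * n) * (2 * ρ ^ (-α)) * (2 * ρ ^ (-α)) := by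
            apply mul_le_mul_of_nonneg_left hfn (by positivity)
    have h3 : C * Real.exp (-τ * n) * (2 * ρ ^ (-α)) * (2 * ρ ^ (-α)) =
        D * Real.exp (-τ * n) := by
      rw [hD]
      calc C * Real.exp (-τ * n) * (2 * ρ ^ (-α)) * (2 * ρ ^ (-α))
          = C * Real.exp (-τ * n) * (2 * ρ ^ (-α) * (2 * ρ ^ (-α))) := by ring
        _ = C * Real.exp (-τ * n) * (4 * ρ') := by rw [hBnd]
        _ = 4 * C * ρ' * Real.exp (-τ * n) := by ring
    have habs := abs_le.mp h
    rw [hI] at *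
    linarith [habs.2, h2, h3.le, h3.ge]
  have hcovI : ∀ n : ℕ, (∫ x, f (T^[n] x) * f x ∂μ) - I * I ≤ I := by
    intro n
    have hle : ∫ x, f (T^[n] x) * f x ∂μ ≤ ∫ x, f (T^[n] x) ∂μ := by
      refine integral_mono (by simpa using hintFF n 0) (hintF n) fun x => ?_
      exact mul_le_of_le_one_right (hf _).1 (hf _).2
    have := hFI n
    nlinarith [mul_self_nonneg I]
  -- expansion of the variance
  have hZ1 : ∫ x, ∑ k ∈ Finset.range m, f (T^[k] x) ∂μ = m * I := by
    rw [integral_finset_sum _ fun k _ => hintF k]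
    calc ∑ k ∈ Finset.range m, ∫ x, f (T^[k] x) ∂μ
        = ∑ _k ∈ Finset.range m, I := Finset.sum_congr rfl fun k _ => hFI k
      _ = m * I := by rw [Finset.sum_const, Finset.card_range, nsmul_eq_mul]
  have hZ2 : ∫ x, (∑ k ∈ Finset.range m, f (T^[k] x)) ^ 2 ∂μ =
      ∑ j ∈ Finset.range m, ∑ k ∈ Finset.range m,
        ∫ x, f (T^[j] x) * f (T^[k] x) ∂μ := by
    have e : ∀ x : X, (∑ k ∈ Finset.range m, f (T^[k] x)) ^ 2 =
        ∑ j ∈ Finset.range m, ∑ k ∈ Finset.range m, f (T^[j] x) * f (T^[k] x) := by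
      intro x
      rw [sq, Finset.sum_mul_sum]
    simp_rw [e]
    rw [integral_finset_sum _ fun j _ =>
      integrable_finset_sum _ fun k _ => hintFF j k]
    exact Finset.sum_congr rfl fun j _ => integral_finset_sum _ fun k _ => hintFF j k
  have hvar : ∫ x, (∑ k ∈ Finset.range m, f (T^[k] x)) ^ 2 ∂μ -
      (∫ x, ∑ k ∈ Finset.range m, f (T^[k] x) ∂μ) ^ 2 =
      ∑ j ∈ Finset.range m, ∑ k ∈ Finset.range m,
        ((∫ x, f (T^[Nat.dist j k] x) * f x ∂μ) - I * I) := by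
    rw [hZ1, hZ2]
    have : ∀ j ∈ Finset.range m, ∑ k ∈ Finset.range m,
        ((∫ x, f (T^[Nat.dist j k] x) * f x ∂μ) - I * I) =
        (∑ k ∈ Finset.range m, ∫ x, f (T^[j] x) * f (T^[k] x) ∂μ) - m * (I * I) := by
      intro j _
      rw [Finset.sum_sub_distrib, Finset.sum_const, Finset.card_range, nsmul_eq_mul]
      congr 1
      exact Finset.sum_congr rfl fun k _ => (hA j k).symm
    rw [Finset.sum_congr rfl this, Finset.sum_sub_distrib, Finset.sum_const,
      Finset.card_range, nsmul_eq_mul]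
    ring
  -- the bound function
  set b : ℕ → ℝ := fun n => min I (D * Real.exp (-τ * n)) with hb
  have hb0 : ∀ n, 0 ≤ b n := fun n =>
    le_min hI0 (mul_nonneg (by rw [hD, hρ']; positivity) (Real.exp_pos _).le)
  have hcovb : ∀ n : ℕ, (∫ x, f (T^[n] x) * f x ∂μ) - I * I ≤ b n := fun n =>
    le_min (hcovI n) (hcovD n)
  -- log m estimates
  have hm3 : (3 : ℝ) ≤ m := by exact_mod_cast hm
  have hlog1 : 1 ≤ Real.log m := by
    have h3 : Real.exp 1 ≤ 3 := by
      have := Real.exp_one_lt_d9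
      linarith
    calc (1 : ℝ) = Real.log (Real.exp 1) := (Real.log_exp 1).symm
      _ ≤ Real.log m := Real.log_le_log (Real.exp_pos 1) (le_trans h3 hm3)
  have hL1 : 1 ≤ L := by
    rw [hL]
    calc (1 : ℝ) = 1 ^ γ := (Real.one_rpow γ).symm
      _ ≤ Real.log m ^ γ := Real.rpow_le_rpow zero_le_one hlog1 (by linarith)
  set N : ℕ := ⌈L⌉₊ with hN
  have hLN : L ≤ N := by rw [hN]; exact Nat.le_ceil L
  have hN2L : (N : ℝ) ≤ 2 * L := by
    have := Nat.ceil_lt_add_one (by linarith : (0:ℝ) ≤ L)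
    rw [← hN] at this
    linarith
  clear_value N
  -- geometric sum bound
  have hgeom : ∑ i ∈ Finset.range m, Real.exp (-τ) ^ i ≤ 1 / (1 - Real.exp (-τ)) := by
    rw [geom_sum_eq (ne_of_lt hr1) m]
    have hpow : 0 ≤ Real.exp (-τ) ^ m := by positivity
    have e : (Real.exp (-τ) ^ m - 1) / (Real.exp (-τ) - 1) =
        (1 - Real.exp (-τ) ^ m) / (1 - Real.exp (-τ)) := by
      rw [div_eq_div_iff (by linarith) (by linarith)]
      ring
    rw [e]
    exact (div_le_div_iff_of_pos_right h1r).2 (by linarith)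
  -- sum of the bound function
  have hsum : ∑ n ∈ Finset.range m, b n ≤ N * I + D * Real.exp (-τ * L) / (1 - Real.exp (-τ)) := by
    have step1 : ∑ n ∈ Finset.range m, b n ≤ ∑ n ∈ Finset.range (N + m), b n :=
      Finset.sum_le_sum_of_subset_of_nonneg
        (Finset.range_subset_range.2 (Nat.le_add_left m N)) (fun i _ _ => hb0 i)
    have step2 : ∑ n ∈ Finset.range (N + m), b n =
        (∑ n ∈ Finset.range N, b n) + ∑ i ∈ Finset.range m, b (N + i) := by
      calc ∑ n ∈ Finset.range (N + m), b n
          = ∑ n ∈ Finset.Ico 0 (N + m), b n := by rw [Finset.range_eq_Ico]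
        _ = (∑ n ∈ Finset.Ico 0 N, b n) + ∑ n ∈ Finset.Ico N (N + m), b n :=
            (Finset.sum_Ico_consecutive _ (Nat.zero_le N) (Nat.le_add_right N m)).symm
        _ = (∑ n ∈ Finset.range N, b n) + ∑ i ∈ Finset.range m, b (N + i) := by
            rw [← Finset.range_eq_Ico, Finset.sum_Ico_eq_sum_range]
            simp
    have step3 : ∑ n ∈ Finset.range N, b n ≤ N * I := by
      calc ∑ n ∈ Finset.range N, b n ≤ ∑ _n ∈ Finset.range N, I :=
            Finset.sum_le_sum fun n _ => min_le_left _ _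
        _ = N * I := by rw [Finset.sum_const, Finset.card_range, nsmul_eq_mul]
    have step4 : ∑ i ∈ Finset.range m, b (N + i) ≤
        D * Real.exp (-τ * L) / (1 - Real.exp (-τ)) := by
      have e1 : ∀ i : ℕ, D * Real.exp (-τ * (N + i : ℕ)) =
          D * Real.exp (-τ * N) * Real.exp (-τ) ^ i := by
        intro i
        have e : (-τ * ((N : ℕ) + (i : ℕ) : ℕ) : ℝ) = -τ * N + (i : ℕ) * (-τ) := by
          push_cast; ring
        rw [e, Real.exp_add, Real.exp_nat_mul]
        ring
      calc ∑ i ∈ Finset.range m, b (N + i)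
          ≤ ∑ i ∈ Finset.range m, D * Real.exp (-τ * (N + i : ℕ)) :=
            Finset.sum_le_sum fun i _ => min_le_right _ _
        _ = D * Real.exp (-τ * N) * ∑ i ∈ Finset.range m, Real.exp (-τ) ^ i := by
            rw [Finset.mul_sum]
            exact Finset.sum_congr rfl fun i _ => e1 i
        _ ≤ D * Real.exp (-τ * N) * (1 / (1 - Real.exp (-τ))) := by
            apply mul_le_mul_of_nonneg_left hgeom
              (mul_nonneg (by rw [hD, hρ']; positivity) (Real.exp_pos _).le)
        _ ≤ D * Real.exp (-τ * L) * (1 / (1 - Real.exp (-τ))) := by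
            have hexp : Real.exp (-τ * N) ≤ Real.exp (-τ * L) := by
              apply Real.exp_le_exp.2
              have := mul_le_mul_of_nonneg_left hLN hτ.le
              linarith
            have hD0 : (0:ℝ) ≤ D := by rw [hD, hρ']; positivity
            have h1 : (0:ℝ) ≤ 1 / (1 - Real.exp (-τ)) := by positivity
            exact mul_le_mul_of_nonneg_right
              (mul_le_mul_of_nonneg_left hexp hD0) h1
        _ = D * Real.exp (-τ * L) / (1 - Real.exp (-τ)) := by ring
    calc ∑ n ∈ Finset.range m, b n ≤ ∑ n ∈ Finset.range (N + m), b n := step1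
      _ = _ + _ := step2
      _ ≤ N * I + D * Real.exp (-τ * L) / (1 - Real.exp (-τ)) := add_le_add step3 step4
  -- final numeric combination
  have hE0 : 0 < Real.exp (-τ * L) := Real.exp_pos _
  have hm0 : (0 : ℝ) ≤ m := by positivity
  have hfinal : 2 * (m : ℝ) * (N * I + D * Real.exp (-τ * L) / (1 - Real.exp (-τ))) ≤
      C₂ * m * (I + ρ' * Real.exp (-τ * L) + L * I) := by
    have hC2a : (4 : ℝ) ≤ C₂ := by
      rw [hC₂]
      have : 0 ≤ 8 * C / (1 - Real.exp (-τ)) := by positivity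
      linarith
    have hC2b : 8 * C / (1 - Real.exp (-τ)) ≤ C₂ := by
      rw [hC₂]; linarith
    have hIm : 0 ≤ I * m := mul_nonneg hI0 hm0
    have hLIm : 0 ≤ L * (I * m) := mul_nonneg (by linarith) hIm
    have hXm : 0 ≤ ρ' * Real.exp (-τ * L) * m :=
      mul_nonneg (mul_nonneg hρ'pos.le hE0.le) hm0
    have k1 : (N : ℝ) * (I * m) ≤ 2 * L * (I * m) :=
      mul_le_mul_of_nonneg_right hN2L hIm
    have k2 : 4 * (L * (I * m)) ≤ C₂ * (L * (I * m)) :=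
      mul_le_mul_of_nonneg_right hC2a hLIm
    have k3 : 8 * C / (1 - Real.exp (-τ)) * (ρ' * Real.exp (-τ * L) * m) ≤
        C₂ * (ρ' * Real.exp (-τ * L) * m) :=
      mul_le_mul_of_nonneg_right hC2b hXm
    have k4 : 0 ≤ C₂ * (I * m) := mul_nonneg (by linarith) hIm
    have e1 : 2 * (m : ℝ) * (N * I + D * Real.exp (-τ * L) / (1 - Real.exp (-τ))) =
        2 * ((N : ℝ) * (I * m)) +
          8 * C / (1 - Real.exp (-τ)) * (ρ' * Real.exp (-τ * L) * m) := by
      rw [hD]; ring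
    have e2 : C₂ * (m : ℝ) * (I + ρ' * Real.exp (-τ * L) + L * I) =
        C₂ * (I * m) + C₂ * (ρ' * Real.exp (-τ * L) * m) + C₂ * (L * (I * m)) := by
      ring
    rw [e1, e2]
    linarith [k1, k2, k3, k4]
  -- putting everything together
  calc ∫ x, (∑ k ∈ Finset.range m, f (T^[k] x)) ^ 2 ∂μ -
      (∫ x, ∑ k ∈ Finset.range m, f (T^[k] x) ∂μ) ^ 2
      = ∑ j ∈ Finset.range m, ∑ k ∈ Finset.range m,
          ((∫ x, f (T^[Nat.dist j k] x) * f x ∂μ) - I * I) := hvar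
    _ ≤ ∑ j ∈ Finset.range m, ∑ k ∈ Finset.range m, b (Nat.dist j k) :=
        Finset.sum_le_sum fun j _ => Finset.sum_le_sum fun k _ => hcovb _
    _ ≤ 2 * m * ∑ n ∈ Finset.range m, b n := double_sum_dist_le b hb0 m
    _ ≤ 2 * m * (N * I + D * Real.exp (-τ * L) / (1 - Real.exp (-τ))) := by
        apply mul_le_mul_of_nonneg_left hsum (by positivity)
    _ ≤ C₂ * m * (I + ρ' * Real.exp (-τ * L) + L * I) := hfinal
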